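/- Let x : [a,b] → ℝⁿ belong to W²₂ (x and x' absolutely continuous, x'' ∈ L²) and let L ∈ C¹([a,b] × ℝ^{3n}, ℝ). Let s(t) = ∫_a^t √(1 + |x'(τ)|²) dτ, l = s(b), let t(s) be the inverse of s(t), and X(s) = x(t(s)). Then the change-of-variables identity holds: ∫_a^b L(t, x(t), x'(t), x''(t)) dt = ∫₀^l L(t(s), X(s), X'(s)/t'(s), X''(s)/t'(s)² − (t''(s)/t'(s)³)·X'(s)) · t'(s) ds. -/

import Mathlib

open MeasureTheory Set Filter Topology intervalIntegral IsUnifLocDoublingMeasure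

section AuxLemmas

variable {E : Type*} [NormedAddCommGroup E] [NormedSpace ℝ E]

lemma neBot_nhdsWithin_diff_singleton {A : Set ℝ} {c d s : ℝ}
    (h : volume (Ioo c d \ A) = 0) (hs : s ∈ Ioo c d) :
    (𝓝[A \ {s}] s).NeBot := by
  rw [← mem_closure_iff_nhdsWithin_neBot]
  by_contra hcl
  rw [Metric.mem_closure_iff] at hcl
  push_neg at hcl
  obtain ⟨ε, hε, hsep⟩ := hcl
  set δ := min ε (d - s) with hδ
  have hδ0 : 0 < δ := lt_min hε (by linarith [hs.2])
  have hδε : δ ≤ ε := min_le_left _ _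
  have hδd : δ ≤ d - s := min_le_right _ _
  have hsub : Ioo s (s + δ) ⊆ Ioo c d \ A := by
    intro y hy
    refine ⟨⟨lt_trans hs.1 hy.1, by linarith [hy.2]⟩, fun hyA => ?_⟩
    have hys : y ≠ s := ne_of_gt hy.1
    have hd := hsep y ⟨hyA, hys⟩
    rw [Real.dist_eq, abs_sub_comm, abs_of_nonneg (by linarith [hy.1.le])] at hd
    linarith [hy.2]
  have h1 : volume (Ioo s (s + δ)) ≤ volume (Ioo c d \ A) := measure_mono hsub
  rw [h, Real.volume_Ioo, nonpos_iff_eq_zero, ENNReal.ofReal_eq_zero] at h1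
  linarith

lemma hasDerivAt_unique_on {f g : ℝ → E} {A : Set ℝ} {s : ℝ} {F G : E}
    (hne : (𝓝[A \ {s}] s).NeBot)
    (hA : ∀ u ∈ A, f u = g u) (hsA : s ∈ A)
    (hf : HasDerivAt f F s) (hg : HasDerivAt g G s) : F = G := by
  have hsub : A \ {s} ⊆ {s}ᶜ := fun u hu => hu.2
  have h1 : Tendsto (slope f s) (𝓝[A \ {s}] s) (𝓝 F) :=
    (hasDerivAt_iff_tendsto_slope.1 hf).mono_left (nhdsWithin_mono _ hsub)
  have h2 : Tendsto (slope g s) (𝓝[A \ {s}] s) (𝓝 G) :=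
    (hasDerivAt_iff_tendsto_slope.1 hg).mono_left (nhdsWithin_mono _ hsub)
  have heq : slope f s =ᶠ[𝓝[A \ {s}] s] slope g s := by
    filter_upwards [self_mem_nhdsWithin] with u hu
    simp only [slope_def_module]
    rw [hA u hu.1, hA s hsA]
  exact tendsto_nhds_unique (h1.congr' heq) h2

lemma my_scomp {F : Type*} [NormedAddCommGroup F] [NormedSpace ℝ F]
    {g : ℝ → F} {g' : F} {h : ℝ → ℝ} {h' s : ℝ}
    (hg : HasDerivAt g g' (h s)) (hh : HasDerivAt h h' s) :
    HasDerivAt (fun u => g (h u)) (h' • g') s :=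
  HasDerivAt.scomp (h := h) (x := s) hg hh

lemma null_image_of_lipschitzOnWith {K : NNReal} {f : ℝ → ℝ} {s N : Set ℝ}
    (h : LipschitzOnWith K f s) (hN : N ⊆ s) (h0 : volume N = 0) :
    volume (f '' N) = 0 := by
  have h1 : μH[1] (f '' N) ≤ (K : ENNReal) ^ (1:ℝ) * μH[1] N :=
    (h.mono hN).hausdorffMeasure_image_le zero_le_one
  rw [← MeasureTheory.hausdorffMeasure_real] at h0 ⊢
  rw [h0, mul_zero] at h1
  exact le_antisymm h1 zero_le

variable [CompleteSpace E]

lemma avg_bound {a b : ℝ} {f : ℝ → E} (hf : IntervalIntegrable f volume a b)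
    {p q : ℝ} (hp : a < p) (hpq : p < q) (hq : q < b) (c : E) :
    ‖(q - p)⁻¹ • (∫ τ in p..q, f τ) - c‖ ≤
      ⨍ y in Icc p q, ‖(Ioo a b).indicator f y - c‖ := by
  set g : ℝ → E := (Ioo a b).indicator f with hg
  have hfIoo : IntegrableOn f (Ioo a b) := hf.1.mono_set Ioo_subset_Ioc_self
  have hgi : Integrable g := hfIoo.integrable_indicator measurableSet_Ioo
  have hqp : (0:ℝ) < q - p := by linarith
  have hint : IntervalIntegrable f volume p q := by
    apply hf.mono_set
    rw [uIcc_of_le hpq.le, uIcc_of_le (by linarith : a ≤ b)]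
    exact Icc_subset_Icc hp.le hq.le
  have h1 : (∫ τ in p..q, (f τ - c)) = (∫ τ in p..q, f τ) - (q - p) • c := by
    rw [integral_sub hint intervalIntegrable_const, intervalIntegral.integral_const]
  have h2 : (q - p)⁻¹ • (∫ τ in p..q, f τ) - c
      = (q - p)⁻¹ • ∫ τ in p..q, (f τ - c) := by
    rw [h1, smul_sub, smul_smul, inv_mul_cancel₀ hqp.ne', one_smul]
  rw [h2]
  have h3 : ‖(q - p)⁻¹ • ∫ τ in p..q, (f τ - c)‖
      ≤ (q - p)⁻¹ * ∫ τ in p..q, ‖f τ - c‖ := by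
    rw [norm_smul, Real.norm_eq_abs, abs_of_pos (by positivity)]
    exact mul_le_mul_of_nonneg_left (norm_integral_le_integral_norm hpq.le)
      (by positivity)
  refine h3.trans ?_
  have h4 : (∫ τ in p..q, ‖f τ - c‖) = ∫ τ in Ioc p q, ‖g τ - c‖ := by
    rw [integral_of_le hpq.le]
    refine setIntegral_congr_fun measurableSet_Ioc (fun y hy => ?_)
    have hmem : y ∈ Ioo a b := ⟨hp.trans hy.1, lt_of_le_of_lt hy.2 hq⟩
    rw [hg, Set.indicator_of_mem hmem]
  have h5 : (∫ τ in Ioc p q, ‖g τ - c‖) ≤ ∫ τ in Icc p q, ‖g τ - c‖ := by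
    apply setIntegral_mono_set ((hgi.integrableOn.sub (integrableOn_const
        ((by rw [Real.volume_Icc]; exact ENNReal.ofReal_ne_top)))).norm)
      (Eventually.of_forall (fun y => norm_nonneg _))
      (HasSubset.Subset.eventuallyLE Ioc_subset_Icc_self)
  rw [setAverage_eq, Real.volume_real_Icc_of_le hpq.le, smul_eq_mul, h4]
  exact mul_le_mul_of_nonneg_left h5 (by positivity)

lemma ae_hasDerivAt_intervalIntegral {a b : ℝ} (hab : a < b) {f : ℝ → E}
    (hf : IntervalIntegrable f volume a b) :
    ∀ᵐ t ∂(volume.restrict (Ioo a b)), HasDerivAt (fun u => ∫ τ in a..u, f τ) (f t) t := by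
  set g : ℝ → E := (Ioo a b).indicator f with hg
  have hfIoo : IntegrableOn f (Ioo a b) := hf.1.mono_set Ioo_subset_Ioc_self
  have hgi : Integrable g := hfIoo.integrable_indicator measurableSet_Ioo
  set v := vitaliFamily (volume : Measure ℝ) 1 with hv
  have hLeb := v.ae_tendsto_average_norm_sub hgi.locallyIntegrable
  filter_upwards [ae_restrict_of_ae hLeb, ae_restrict_mem measurableSet_Ioo] with t ht htIoo
  set F : ℝ → E := fun u => ∫ τ in a..u, f τ with hF
  have hgt : g t = f t := indicator_of_mem htIoo f
  have hmono : ∀ u, u ∈ Icc a b → IntervalIntegrable f volume a u := by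
    intro u hu
    apply hf.mono_set
    rw [uIcc_of_le hu.1, uIcc_of_le hab.le]
    exact Icc_subset_Icc le_rfl hu.2
  rw [hasDerivAt_iff_tendsto_slope, ← nhdsLT_sup_nhdsGT t, tendsto_sup]
  constructor
  · rw [← tendsto_sub_nhds_zero_iff]
    have hBl : Tendsto (fun u => ⨍ y in Icc u t, ‖g y - g t‖) (𝓝[<] t) (𝓝 0) :=
      ht.comp (Real.tendsto_Icc_vitaliFamily_left t)
    apply squeeze_zero_norm' _ hBl
    filter_upwards [Ioo_mem_nhdsLT_of_mem (⟨htIoo.1, le_refl t⟩ : t ∈ Ioc a t)] with u hu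
    have hut : u < t := hu.2
    have hsl : slope F t u = (t - u)⁻¹ • ((∫ τ in u..t, f τ)) := by
      rw [slope_def_module, ← neg_sub (F t) (F u), ← neg_sub t u, inv_neg,
        neg_smul, smul_neg, neg_neg]
      congr 1
      exact integral_interval_sub_left (hmono t (Ioo_subset_Icc_self htIoo))
        (hmono u ⟨hu.1.le, by linarith [htIoo.2]⟩)
    rw [hsl, hgt]
    exact avg_bound hf hu.1 hut htIoo.2 (f t)
  · rw [← tendsto_sub_nhds_zero_iff]
    have hBr : Tendsto (fun u => ⨍ y in Icc t u, ‖g y - g t‖) (𝓝[>] t) (𝓝 0) :=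
      ht.comp (Real.tendsto_Icc_vitaliFamily_right t)
    apply squeeze_zero_norm' _ hBr
    filter_upwards [Ioo_mem_nhdsGT_of_mem (⟨le_refl t, htIoo.2⟩ : t ∈ Ico t b)] with u hu
    have htu : t < u := hu.1
    have hsl : slope F t u = (u - t)⁻¹ • ((∫ τ in t..u, f τ)) := by
      rw [slope_def_module]
      congr 1
      exact integral_interval_sub_left (hmono u ⟨by linarith [htIoo.1], hu.2.le⟩)
        (hmono t (Ioo_subset_Icc_self htIoo))
    rw [hsl, hgt]
    exact avg_bound hf htIoo.1 htu hu.2 (f t)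

end AuxLemmas

/-- Euclidean space ℝⁿ. -/
abbrev Evec (n : ℕ) := EuclideanSpace ℝ (Fin n)

/-- `(x, x', x'')` is a derivative chain of class `W²₂` on `[a,b]`:
`x` and `x'` are absolutely continuous (encoded via the fundamental theorem of
calculus) and `x'' ∈ L²([a,b])`. -/
def MemW22 (n : ℕ) (a b : ℝ) (x x' x'' : ℝ → Evec n) : Prop :=
  (IntervalIntegrable x' volume a b ∧ ∀ t ∈ Icc a b, x t = x a + ∫ τ in a..t, x' τ) ∧
  (IntervalIntegrable x'' volume a b ∧ ∀ t ∈ Icc a b, x' t = x' a + ∫ τ in a..t, x'' τ) ∧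
  MemLp x'' 2 (volume.restrict (Icc a b))

/-- the change-of-variables identity for the second-order functional under
the arc-length reparameterization `t = t(s)`, `X(s) = x(t(s))`. -/
theorem change_of_variables_arclength_second_order
    (n : ℕ) (hn : 1 ≤ n) (a b : ℝ) (hab : a < b)
    (L : ℝ × Evec n × Evec n × Evec n → ℝ) (hLC1 : ContDiff ℝ 1 L)
    (x x' x'' : ℝ → Evec n) (hW : MemW22 n a b x x' x'')
    -- arc-length reparameterization
    (σ : ℝ → ℝ) (hσ : σ = fun t => ∫ τ in a..t, Real.sqrt (1 + ‖x' τ‖ ^ 2))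
    (l : ℝ) (hl : l = σ b)
    (T : ℝ → ℝ) (hTinv : ∀ t ∈ Icc a b, T (σ t) = t) (hTmem : ∀ s ∈ Icc 0 l, T s ∈ Icc a b)
    (T' T'' : ℝ → ℝ)
    (hT' : ∀ᵐ s ∂volume.restrict (Icc 0 l), HasDerivAt T (T' s) s)
    (hT'' : ∀ᵐ s ∂volume.restrict (Icc 0 l), HasDerivAt T' (T'' s) s)
    (X : ℝ → Evec n) (hX : ∀ s ∈ Icc 0 l, X s = x (T s))
    (X' X'' : ℝ → Evec n)
    (hX' : ∀ᵐ s ∂volume.restrict (Icc 0 l), HasDerivAt X (X' s) s)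
    (hX'' : ∀ᵐ s ∂volume.restrict (Icc 0 l), HasDerivAt X' (X'' s) s) :
    ∫ t in a..b, L (t, x t, x' t, x'' t) =
      ∫ s in (0:ℝ)..l,
        L (T s, X s, (T' s)⁻¹ • X' s,
            (T' s ^ 2)⁻¹ • X'' s - (T'' s / T' s ^ 3) • X' s) * T' s := by
  obtain ⟨⟨hx'i, hxF⟩, ⟨hx''i, hx'F⟩, -⟩ := hW
  have ha : a ∈ Icc a b := left_mem_Icc.2 hab.le
  have hb : b ∈ Icc a b := right_mem_Icc.2 hab.le
  -- continuity of x' on [a,b]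
  have hprim2 : ContinuousOn (fun t => x' a + ∫ τ in a..t, x'' τ) (Icc a b) := by
    have h := continuousOn_primitive_interval' hx''i left_mem_uIcc
    rw [uIcc_of_le hab.le] at h
    exact continuousOn_const.add h
  have hx'cont : ContinuousOn x' (Icc a b) := hprim2.congr (fun t ht => hx'F t ht)
  -- bound on ‖x'‖
  obtain ⟨C, hC⟩ := (isCompact_Icc : IsCompact (Icc a b)).exists_bound_of_continuousOn hx'cont
  set ρ : ℝ → ℝ := fun t => Real.sqrt (1 + ‖x' t‖ ^ 2) with hρdef
  have hρcont : ContinuousOn ρ (Icc a b) :=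
    (continuousOn_const.add ((hx'cont.norm).pow 2)).sqrt
  have hρ1 : ∀ t, 1 ≤ ρ t := by
    intro t
    have h1 : (1:ℝ) ≤ 1 + ‖x' t‖ ^ 2 := le_add_of_nonneg_right (sq_nonneg _)
    nlinarith [Real.sq_sqrt (by positivity : (0:ℝ) ≤ 1 + ‖x' t‖ ^ 2),
      Real.sqrt_nonneg (1 + ‖x' t‖ ^ 2)]
  have hρpos : ∀ t, 0 < ρ t := fun t => lt_of_lt_of_le one_pos (hρ1 t)
  set M : ℝ := Real.sqrt (1 + C ^ 2) with hMdef
  have hρM : ∀ t ∈ Icc a b, ρ t ≤ M := by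
    intro t ht
    apply Real.sqrt_le_sqrt
    nlinarith [hC t ht, norm_nonneg (x' t)]
  have hM0 : 0 ≤ M := Real.sqrt_nonneg _
  -- integrability of ρ
  have hρint : ∀ {p q : ℝ}, p ∈ Icc a b → q ∈ Icc a b → IntervalIntegrable ρ volume p q := by
    intro p q hp hq
    apply (hρcont.mono ?_).intervalIntegrable
    intro y hy
    rcases le_total p q with h | h
    · rw [uIcc_of_le h] at hy; exact ⟨hp.1.trans hy.1, hy.2.trans hq.2⟩
    · rw [uIcc_of_ge h] at hy; exact ⟨hq.1.trans hy.1, hy.2.trans hp.2⟩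
  have hσdiff : ∀ {p q : ℝ}, p ∈ Icc a b → q ∈ Icc a b → σ q - σ p = ∫ τ in p..q, ρ τ := by
    intro p q hp hq
    rw [hσ]
    exact integral_interval_sub_left (hρint ha hq) (hρint ha hp)
  have hσmono : ∀ {p q : ℝ}, p ∈ Icc a b → q ∈ Icc a b → p ≤ q → q - p ≤ σ q - σ p := by
    intro p q hp hq hpq
    rw [hσdiff hp hq]
    calc q - p = ∫ τ in p..q, (1:ℝ) := by simp
    _ ≤ ∫ τ in p..q, ρ τ :=
      integral_mono_on hpq intervalIntegrable_const (hρint hp hq) (fun t _ => hρ1 t)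
  have hσlipb : ∀ {p q : ℝ}, p ∈ Icc a b → q ∈ Icc a b → p ≤ q → σ q - σ p ≤ M * (q - p) := by
    intro p q hp hq hpq
    rw [hσdiff hp hq]
    calc (∫ τ in p..q, ρ τ) ≤ ∫ τ in p..q, M := by
          apply integral_mono_on hpq (hρint hp hq) intervalIntegrable_const
          intro t ht
          exact hρM t ⟨hp.1.trans ht.1, ht.2.trans hq.2⟩
    _ = M * (q - p) := by rw [intervalIntegral.integral_const, smul_eq_mul, mul_comm]
  have hσa : σ a = 0 := by rw [hσ]; simp
  have hl0 : 0 < l := by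
    have := hσmono ha hb hab.le
    rw [hσa] at this; rw [hl]; linarith
  have hσmem : ∀ t ∈ Icc a b, σ t ∈ Icc 0 l := by
    intro t ht
    obtain ⟨ht1, ht2⟩ := ht
    constructor
    · have := hσmono ha ⟨ht1, ht2⟩ ht1; rw [hσa] at this; linarith
    · have := hσmono ⟨ht1, ht2⟩ hb ht2; rw [hl]; linarith
  have hσcont : ContinuousOn σ (Icc a b) := by
    have h := continuousOn_primitive_interval' (hρint ha hb) left_mem_uIcc
    rw [uIcc_of_le hab.le] at h
    rw [hσ]; exact h
  -- σ ∘ T = id on [0,l]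
  have hσT : ∀ s ∈ Icc 0 l, σ (T s) = s := by
    intro s hs
    have hsurj : s ∈ σ '' Icc a b := by
      apply intermediate_value_Icc hab.le hσcont
      rw [hσa, ← hl]; exact hs
    obtain ⟨t, ht, rfl⟩ := hsurj
    rw [hTinv t ht]
  have hT0 : T 0 = a := by rw [← hσa]; exact hTinv a ha
  have hTl : T l = b := by rw [hl]; exact hTinv b hb
  have hTmono : ∀ {s₁ s₂ : ℝ}, s₁ ∈ Icc 0 l → s₂ ∈ Icc 0 l → s₁ < s₂ → T s₁ < T s₂ := by
    intro s₁ s₂ h1 h2 h12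
    by_contra h
    push_neg at h
    have := hσmono (hTmem _ h2) (hTmem _ h1) h
    rw [hσT _ h1, hσT _ h2] at this
    linarith
  have hTIoo : ∀ s ∈ Ioo 0 l, T s ∈ Ioo a b := by
    intro s hs
    constructor
    · rw [← hT0]; exact hTmono (left_mem_Icc.2 hl0.le) (Ioo_subset_Icc_self hs) hs.1
    · rw [← hTl]; exact hTmono (Ioo_subset_Icc_self hs) (right_mem_Icc.2 hl0.le) hs.2
  have hσIoo : ∀ t ∈ Ioo a b, σ t ∈ Ioo 0 l := by
    intro t ht
    constructor
    · have := hσmono ha (Ioo_subset_Icc_self ht) ht.1.le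
      rw [hσa] at this; linarith [ht.1]
    · have := hσmono (Ioo_subset_Icc_self ht) hb ht.2.le
      rw [hl]; linarith [ht.2]
  -- Lipschitz properties
  have hTlip : LipschitzOnWith 1 T (Icc 0 l) := by
    apply LipschitzOnWith.of_dist_le_mul
    intro s₁ h1 s₂ h2
    rw [NNReal.coe_one, one_mul, Real.dist_eq, Real.dist_eq]
    rcases le_total s₁ s₂ with h | h
    · have hTle : T s₁ ≤ T s₂ := by
        rcases eq_or_lt_of_le h with rfl | hlt
        · exact le_rfl
        · exact (hTmono h1 h2 hlt).le
      have := hσmono (hTmem _ h1) (hTmem _ h2) hTle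
      rw [hσT _ h1, hσT _ h2] at this
      rw [abs_of_nonpos (by linarith), abs_of_nonpos (by linarith)]
      linarith
    · have hTle : T s₂ ≤ T s₁ := by
        rcases eq_or_lt_of_le h with rfl | hlt
        · exact le_rfl
        · exact (hTmono h2 h1 hlt).le
      have := hσmono (hTmem _ h2) (hTmem _ h1) hTle
      rw [hσT _ h1, hσT _ h2] at this
      rw [abs_of_nonneg (by linarith), abs_of_nonneg (by linarith)]
      linarith
  have hσlip : LipschitzOnWith (Real.toNNReal M) σ (Icc a b) := by
    apply LipschitzOnWith.of_dist_le_mul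
    intro t₁ h1 t₂ h2
    rw [Real.coe_toNNReal M hM0, Real.dist_eq, Real.dist_eq]
    rcases le_total t₁ t₂ with h | h
    · have h1' := hσmono h1 h2 h
      have h2' := hσlipb h1 h2 h
      rw [abs_of_nonpos (by linarith), abs_of_nonpos (by linarith)]
      linarith
    · have h1' := hσmono h2 h1 h
      have h2' := hσlipb h2 h1 h
      rw [abs_of_nonneg (by linarith), abs_of_nonneg (by linarith)]
      linarith
  -- derivative facts on (a,b)
  have hxderiv : ∀ t ∈ Ioo a b, HasDerivAt x (x' t) t := by
    intro t ht
    have hii : IntervalIntegrable x' volume a t := by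
      apply hx'i.mono_set
      rw [uIcc_of_le ht.1.le, uIcc_of_le hab.le]
      exact Icc_subset_Icc le_rfl ht.2.le
    have hprim : HasDerivAt (fun u => ∫ τ in a..u, x' τ) (x' t) t := by
      apply integral_hasDerivAt_right hii
        ((hx'cont.mono Ioo_subset_Icc_self).stronglyMeasurableAtFilter isOpen_Ioo t ht)
        ((hx'cont.mono Ioo_subset_Icc_self).continuousAt (Ioo_mem_nhds ht.1 ht.2))
    exact (HasDerivAt.const_add (x a) hprim).congr_of_eventuallyEq
      (eventuallyEq_of_mem (Icc_mem_nhds ht.1 ht.2) hxF)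
  have hσderiv : ∀ t ∈ Ioo a b, HasDerivAt σ (ρ t) t := by
    intro t ht
    rw [hσ]
    apply integral_hasDerivAt_right
      (hρint ha (Ioo_subset_Icc_self ht))
      ((hρcont.mono Ioo_subset_Icc_self).stronglyMeasurableAtFilter isOpen_Ioo t ht)
      ((hρcont.mono Ioo_subset_Icc_self).continuousAt (Ioo_mem_nhds ht.1 ht.2))
  have h2nd : ∀ᵐ t ∂volume.restrict (Ioo a b), HasDerivAt x' (x'' t) t := by
    filter_upwards [ae_hasDerivAt_intervalIntegral hab hx''i,
      ae_restrict_mem measurableSet_Ioo] with t ht htm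
    exact (HasDerivAt.const_add (x' a) ht).congr_of_eventuallyEq
      (eventuallyEq_of_mem (Icc_mem_nhds htm.1 htm.2) hx'F)
  -- pull back the second derivative through T
  have hbad : volume {t | t ∈ Ioo a b ∧ ¬ HasDerivAt x' (x'' t) t} = 0 := by
    rw [ae_restrict_iff' measurableSet_Ioo] at h2nd
    rw [ae_iff] at h2nd
    apply measure_mono_null _ h2nd
    intro t ht
    simp only [mem_setOf_eq, not_forall] at *
    exact ⟨ht.1, ht.2⟩
  have hpull : ∀ᵐ s ∂volume.restrict (Ioo 0 l), HasDerivAt x' (x'' (T s)) (T s) := by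
    rw [ae_restrict_iff' measurableSet_Ioo, ae_iff]
    have himg : volume (σ '' {t | t ∈ Ioo a b ∧ ¬ HasDerivAt x' (x'' t) t}) = 0 :=
      null_image_of_lipschitzOnWith hσlip (fun t ht => Ioo_subset_Icc_self ht.1) hbad
    apply measure_mono_null _ himg
    intro s hs
    simp only [mem_setOf_eq, not_forall] at hs
    obtain ⟨hs1, hs2⟩ := hs
    refine ⟨T s, ⟨hTIoo s hs1, hs2⟩, hσT s (Ioo_subset_Icc_self hs1)⟩
  -- restrict the given a.e. facts to Ioo 0 l
  have hT'r := ae_restrict_of_ae_restrict_of_subset Ioo_subset_Icc_self hT'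
  have hT''r := ae_restrict_of_ae_restrict_of_subset Ioo_subset_Icc_self hT''
  have hX'r := ae_restrict_of_ae_restrict_of_subset Ioo_subset_Icc_self hX'
  have hX''r := ae_restrict_of_ae_restrict_of_subset Ioo_subset_Icc_self hX''
  -- step 1: T' s * ρ (T s) = 1
  have hstep1 : ∀ᵐ s ∂volume.restrict (Ioo 0 l), T' s * ρ (T s) = 1 := by
    filter_upwards [hT'r, ae_restrict_mem measurableSet_Ioo] with s h1 hs
    have hcomp : HasDerivAt (fun u => σ (T u)) (T' s • ρ (T s)) s := my_scomp (hσderiv _ (hTIoo s hs)) h1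
    have heq : (fun u => σ (T u)) =ᶠ[𝓝 s] id :=
      eventuallyEq_of_mem (Icc_mem_nhds hs.1 hs.2) (fun u hu => hσT u hu)
    have h2 : HasDerivAt id (T' s • ρ (T s)) s := hcomp.congr_of_eventuallyEq heq.symm
    have h3 := h2.unique (hasDerivAt_id s)
    rw [smul_eq_mul] at h3
    linarith [h3]
  have hT'pos : ∀ᵐ s ∂volume.restrict (Ioo 0 l), 0 < T' s := by
    filter_upwards [hstep1] with s h1
    rcases lt_trichotomy (T' s) 0 with h | h | h
    · nlinarith [hρpos (T s)]
    · rw [h, zero_mul] at h1; norm_num at h1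
    · exact h
  -- step 2: X' s = T' s • x' (T s)
  have hstep2 : ∀ᵐ s ∂volume.restrict (Ioo 0 l), X' s = T' s • x' (T s) := by
    filter_upwards [hT'r, hX'r, ae_restrict_mem measurableSet_Ioo] with s h1 h2 hs
    have hcomp : HasDerivAt (fun u => x (T u)) (T' s • x' (T s)) s := my_scomp (hxderiv _ (hTIoo s hs)) h1
    have heq : X =ᶠ[𝓝 s] (fun u => x (T u)) :=
      eventuallyEq_of_mem (Icc_mem_nhds hs.1 hs.2) (fun u hu => hX u hu)
    exact h2.unique (hcomp.congr_of_eventuallyEq heq)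
  -- step 3: X'' s = T'' s • x' (T s) + (T' s * T' s) • x'' (T s)
  set G : ℝ → Evec n := fun u => T' u • x' (T u) with hGdef
  set A : Set ℝ := {u | u ∈ Ioo 0 l ∧ X' u = G u} with hAdef
  have hA0 : volume (Ioo 0 l \ A) = 0 := by
    rw [ae_restrict_iff' measurableSet_Ioo, ae_iff] at hstep2
    apply measure_mono_null _ hstep2
    intro u hu
    simp only [mem_diff, hAdef, mem_setOf_eq, not_and, mem_setOf_eq, not_forall] at *
    exact ⟨hu.1, fun h => (hu.2 hu.1) h⟩
  have hstep3 : ∀ᵐ s ∂volume.restrict (Ioo 0 l),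
      X'' s = T'' s • x' (T s) + (T' s * T' s) • x'' (T s) := by
    filter_upwards [hT'r, hT''r, hX''r, hpull, hstep2,
      ae_restrict_mem measurableSet_Ioo] with s h1 h2 h3 h4 h5 hs
    have hxTs : HasDerivAt (fun u => x' (T u)) (T' s • x'' (T s)) s := my_scomp h4 h1
    have hGd : HasDerivAt G (T' s • (T' s • x'' (T s)) + T'' s • x' (T s)) s := h2.smul hxTs
    have hne := neBot_nhdsWithin_diff_singleton hA0 hs
    have huniq : X'' s = T' s • (T' s • x'' (T s)) + T'' s • x' (T s) :=
      hasDerivAt_unique_on hne (fun u hu => hu.2) ⟨hs, h5⟩ h3 hGd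
    rw [huniq, smul_smul, add_comm]
  -- the key pointwise identity
  set fL : ℝ → ℝ := fun t => L (t, x t, x' t, x'' t) with hfLdef
  have hkey : ∀ᵐ s ∂volume.restrict (Ioo 0 l),
      |T' s| • fL (T s) =
        L (T s, X s, (T' s)⁻¹ • X' s,
            (T' s ^ 2)⁻¹ • X'' s - (T'' s / T' s ^ 3) • X' s) * T' s := by
    filter_upwards [hstep2, hstep3, hT'pos, ae_restrict_mem measurableSet_Ioo]
      with s h2 h3 hpos hs
    have hc : T' s ≠ 0 := hpos.ne'
    have hxs : X s = x (T s) := hX s (Ioo_subset_Icc_self hs)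
    have hx's : (T' s)⁻¹ • X' s = x' (T s) := by
      rw [h2, smul_smul, inv_mul_cancel₀ hc, one_smul]
    have hx''s : (T' s ^ 2)⁻¹ • X'' s - (T'' s / T' s ^ 3) • X' s = x'' (T s) := by
      rw [h3, h2]
      match_scalars
      · field_simp
        ring
      · field_simp
    rw [abs_of_pos hpos, smul_eq_mul, mul_comm, hfLdef]
    simp only []
    rw [hxs, hx's, hx''s]
  -- the good set for the change of variables
  have hBnull : volume {s | s ∈ Ioo 0 l ∧ ¬ (HasDerivAt T (T' s) s ∧ 0 < T' s)} = 0 := by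
    have hcomb : ∀ᵐ s ∂volume.restrict (Ioo 0 l), HasDerivAt T (T' s) s ∧ 0 < T' s := by
      filter_upwards [hT'r, hT'pos] with s h1 h2; exact ⟨h1, h2⟩
    rw [ae_restrict_iff' measurableSet_Ioo, ae_iff] at hcomb
    apply measure_mono_null _ hcomb
    intro s hsm
    simp only [mem_setOf_eq, not_forall] at *
    exact ⟨hsm.1, hsm.2⟩
  set Bm : Set ℝ := toMeasurable volume {s | s ∈ Ioo 0 l ∧ ¬ (HasDerivAt T (T' s) s ∧ 0 < T' s)}
    with hBmdef
  have hBm0 : volume Bm = 0 := by rw [hBmdef, measure_toMeasurable]; exact hBnull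
  set A₁ : Set ℝ := Ioo 0 l \ Bm with hA₁def
  have hA₁m : MeasurableSet A₁ := measurableSet_Ioo.diff (measurableSet_toMeasurable _ _)
  have hA₁prop : ∀ s ∈ A₁, HasDerivAt T (T' s) s ∧ 0 < T' s := by
    intro s hs
    by_contra h
    exact hs.2 (subset_toMeasurable _ _ ⟨hs.1, h⟩)
  have hA₁diff : volume (Ioo 0 l \ A₁) = 0 := by
    apply measure_mono_null _ hBm0
    intro s hs
    rcases Classical.em (s ∈ Bm) with h | h
    · exact h
    · exact absurd ⟨hs.1, h⟩ hs.2
  have hA₁ae : A₁ =ᵐ[volume] Ioo 0 l := by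
    rw [ae_eq_set]
    constructor
    · rw [diff_eq_empty.2 diff_subset]; exact measure_empty
    · exact hA₁diff
  have hinj : InjOn T A₁ := by
    intro u hu v hv huv
    by_contra hne
    rcases lt_or_gt_of_ne hne with h | h
    · exact absurd huv (hTmono (Ioo_subset_Icc_self hu.1) (Ioo_subset_Icc_self hv.1) h).ne
    · exact absurd huv.symm (hTmono (Ioo_subset_Icc_self hv.1) (Ioo_subset_Icc_self hu.1) h).ne
  have hCOV := integral_image_eq_integral_abs_deriv_smul hA₁m
    (fun s hs => (hA₁prop s hs).1.hasDerivWithinAt) hinj fL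
  have himg_sub : T '' A₁ ⊆ Ioo a b := by
    rintro t ⟨s, hs, rfl⟩
    exact hTIoo s hs.1
  have hcover : Ioo a b \ T '' A₁ ⊆ T '' (Ioo 0 l \ A₁) := by
    rintro t ⟨ht, hnt⟩
    refine ⟨σ t, ⟨hσIoo t ht, fun hmem => hnt ?_⟩, hTinv t (Ioo_subset_Icc_self ht)⟩
    exact ⟨σ t, hmem, hTinv t (Ioo_subset_Icc_self ht)⟩
  have himgnull : volume (T '' (Ioo 0 l \ A₁)) = 0 :=
    null_image_of_lipschitzOnWith hTlip (diff_subset.trans Ioo_subset_Icc_self) hA₁diff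
  have hsets : T '' A₁ =ᵐ[volume] Ioo a b := by
    rw [ae_eq_set]
    constructor
    · rw [diff_eq_empty.2 himg_sub]; exact measure_empty
    · exact measure_mono_null hcover himgnull
  calc ∫ t in a..b, L (t, x t, x' t, x'' t)
      = ∫ t in Ioo a b, fL t := by
        rw [integral_of_le hab.le, integral_Ioc_eq_integral_Ioo]
    _ = ∫ t in T '' A₁, fL t := (setIntegral_congr_set hsets).symm
    _ = ∫ s in A₁, |T' s| • fL (T s) := hCOV
    _ = ∫ s in Ioo 0 l, |T' s| • fL (T s) := setIntegral_congr_set hA₁ae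
    _ = ∫ s in Ioo 0 l,
          L (T s, X s, (T' s)⁻¹ • X' s,
              (T' s ^ 2)⁻¹ • X'' s - (T'' s / T' s ^ 3) • X' s) * T' s := by
        apply setIntegral_congr_ae measurableSet_Ioo
        rw [ae_restrict_iff' measurableSet_Ioo] at hkey
        filter_upwards [hkey] with s hsk hsm
        exact hsk hsm
    _ = ∫ s in (0:ℝ)..l,
          L (T s, X s, (T' s)⁻¹ • X' s,
              (T' s ^ 2)⁻¹ • X'' s - (T'' s / T' s ^ 3) • X' s) * T' s := by
        rw [integral_of_le hl0.le, integral_Ioc_eq_integral_Ioo]
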